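/- Let p(t) be a real polynomial and ν_p the number of sign changes in its coefficient sequence. If α > 0 is a root of p and p(t) = (t - α) q(t), then ν_q ≤ ν_p - 1. -/

import Mathlib

open scoped Classical

/-- The number of sign changes in the sequence of nonzero coefficients of a real polynomial. -/
noncomputable def signChanges (p : Polynomial ℝ) : ℕ :=
  let l := ((List.range (p.natDegree + 1)).map p.coeff).filter (fun a => a ≠ 0)
  ((l.zip l.tail).filter (fun ab => ab.1 * ab.2 < 0)).length

open List


/-- recursive sign-change counter -/
noncomputable def chg : List ℝ → ℕ
  | a :: b :: t => (if a * b < 0 then 1 else 0) + chg (b :: t)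
  | _ => 0

@[simp] lemma chg_nil : chg [] = 0 := rfl
@[simp] lemma chg_single (a : ℝ) : chg [a] = 0 := rfl
lemma chg_cons2 (a b : ℝ) (t : List ℝ) :
    chg (a :: b :: t) = (if a * b < 0 then 1 else 0) + chg (b :: t) := rfl

lemma chg_eq (l : List ℝ) :
    ((l.zip l.tail).filter (fun ab => ab.1 * ab.2 < 0)).length = chg l := by
  induction l with
  | nil => rfl
  | cons a t ih =>
    cases t with
    | nil => rfl
    | cons b t' =>
      have hz : (a :: b :: t').zip (a :: b :: t').tail
          = (a, b) :: ((b :: t').zip (b :: t').tail) := rfl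
      rw [hz, List.filter_cons]
      by_cases h : a * b < 0
      · rw [if_pos (by simpa using h), List.length_cons, ih, chg_cons2, if_pos h, add_comm]
      · rw [if_neg (by simpa using h), ih, chg_cons2, if_neg h, zero_add]

lemma chg_le_cons (a : ℝ) (l : List ℝ) : chg l ≤ chg (a :: l) := by
  cases l with
  | nil => simp
  | cons b t => rw [chg_cons2]; omega

lemma chg_cons_cons_le (a b : ℝ) (hb : b ≠ 0) (t : List ℝ) :
    chg (a :: t) ≤ chg (a :: b :: t) := by
  cases t with
  | nil => simp [chg_cons2]
  | cons c t' =>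
    rw [chg_cons2, chg_cons2 a b, chg_cons2 b c]
    have hb2 : 0 < b * b := mul_self_pos.mpr hb
    have key : (if a * c < 0 then (1:ℕ) else 0) ≤
        (if a * b < 0 then 1 else 0) + (if b * c < 0 then 1 else 0) := by
      by_cases hac : a * c < 0
      · by_cases hab : a * b < 0
        · rw [if_pos hac, if_pos hab]; omega
        · have hbc : b * c < 0 := by push_neg at hab; nlinarith
          rw [if_pos hac, if_neg hab, if_pos hbc]
      · rw [if_neg hac]; omega
    omega

lemma chg_sublist_cons : ∀ {t : List ℝ} {t' : List ℝ} (a : ℝ), t' <+ t →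
    (∀ x ∈ t, x ≠ 0) → chg (a :: t') ≤ chg (a :: t) := by
  intro t
  induction t with
  | nil => intro t' a h _; rw [List.sublist_nil.mp h]
  | cons b s ih =>
    intro t' a h hnz
    rcases h with _ | @⟨t', _, _, h⟩ | @⟨t', _, h⟩
    · calc chg (a :: t') ≤ chg (a :: s) := ih a ‹_› (fun x hx => hnz x (List.mem_cons_of_mem _ hx))
        _ ≤ chg (a :: b :: s) := chg_cons_cons_le a b (hnz b List.mem_cons_self) s
    · rw [chg_cons2, chg_cons2 a b s]
      have := ih b ‹_› (fun x hx => hnz x (List.mem_cons_of_mem _ hx))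
      omega

lemma chg_sublist : ∀ {l l' : List ℝ}, l' <+ l → (∀ x ∈ l, x ≠ 0) → chg l' ≤ chg l := by
  intro l
  induction l with
  | nil => intro l' h _; rw [List.sublist_nil.mp h]
  | cons b s ih =>
    intro l' h hnz
    rcases h with _ | @⟨l', _, _, h⟩ | @⟨l', _, h⟩
    · calc chg l' ≤ chg s := ih ‹_› (fun x hx => hnz x (List.mem_cons_of_mem _ hx))
        _ ≤ chg (b :: s) := chg_le_cons b s
    · exact chg_sublist_cons b ‹_› (fun x hx => hnz x (List.mem_cons_of_mem _ hx))

lemma chg_chain : ∀ (l : List ℝ), l ≠ [] → l.Chain' (fun a b => a * b < 0) →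
    chg l + 1 = l.length := by
  intro l
  induction l with
  | nil => intro h; exact absurd rfl h
  | cons a t ih =>
    intro _ hc
    cases t with
    | nil => simp
    | cons b t' =>
      rw [List.Chain', List.isChain_cons_cons] at hc
      rw [chg_cons2, if_pos hc.1]
      have := ih (by simp) hc.2
      simp only [List.length_cons] at this ⊢
      omega

lemma getLastD_ne {α : Type*} (l : List α) (h : l ≠ []) (d e : α) :
    l.getLastD d = l.getLastD e := by
  cases l with
  | nil => exact absurd rfl h
  | cons a t => rw [List.getLastD_cons, List.getLastD_cons]

lemma getLastD_cons_ne {α : Type*} (a : α) {l : List α} (h : l ≠ []) (d e : α) :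
    (a :: l).getLastD d = l.getLastD e := by
  rw [List.getLastD_cons]
  exact getLastD_ne l h a e

lemma getLastD_map (f : ℕ → ℝ) : ∀ (J : List ℕ), J ≠ [] → ∀ (d : ℝ) (e : ℕ),
    (J.map f).getLastD d = f (J.getLastD e) := by
  intro J
  induction J with
  | nil => intro h; exact absurd rfl h
  | cons a t ih =>
    intro _ d e
    cases t with
    | nil => simp
    | cons b t' =>
      rw [List.map_cons, List.getLastD_cons, List.getLastD_cons]
      exact ih (by simp) (f a) a

lemma exists_alt_sublist : ∀ (l : List ℝ), (∀ x ∈ l, x ≠ 0) → l ≠ [] →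
    ∃ l' : List ℝ, l' <+ l ∧ l'.Chain' (fun a b => a * b < 0) ∧
      l'.length = chg l + 1 ∧ 0 < l'.headI * l.headI ∧
      0 < l'.getLastD 1 * l.getLastD 1 := by
  intro l
  induction l with
  | nil => intro _ h; exact absurd rfl h
  | cons a t ih =>
    intro hnz _
    have ha : a ≠ 0 := hnz a List.mem_cons_self
    cases t with
    | nil =>
      refine ⟨[a], List.Sublist.refl _, List.isChain_singleton _, by simp [chg_single], ?_, ?_⟩ <;>
        simpa using mul_self_pos.mpr ha
    | cons b t' =>
      have hb : b ≠ 0 := hnz b (by simp)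
      have hb2 : 0 < b * b := mul_self_pos.mpr hb
      obtain ⟨l'', hsub, hchain, hlen, hhead, hlast⟩ :=
        ih (fun x hx => hnz x (List.mem_cons_of_mem _ hx)) (by simp)
      have hne'' : l'' ≠ [] := by
        intro h; rw [h] at hlen; simp at hlen
      obtain ⟨h, rest, rfl⟩ : ∃ h rest, l'' = h :: rest := by
        cases l'' with
        | nil => exact absurd rfl hne''
        | cons x y => exact ⟨x, y, rfl⟩
      simp only [List.headI] at hhead
      have hh : h ≠ 0 := by
        intro e; rw [e] at hhead; simp at hhead
      have hh2 : 0 < h * h := mul_self_pos.mpr hh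
      by_cases hab : a * b < 0
      · refine ⟨a :: h :: rest, List.Sublist.cons₂ a hsub, ?_, ?_, ?_, ?_⟩
        · rw [List.Chain', List.isChain_cons_cons]
          refine ⟨?_, hchain⟩
          nlinarith [mul_neg_of_neg_of_pos hab hhead]
        · rw [List.length_cons, hlen, chg_cons2, if_pos hab]; omega
        · simpa using mul_self_pos.mpr ha
        · rw [getLastD_cons_ne a (l := h :: rest) (by simp) 1 1,
            getLastD_cons_ne a (l := b :: t') (by simp) 1 1]
          exact hlast
      · have hab' : 0 < a * b := by
          rcases lt_or_gt_of_ne (mul_ne_zero ha hb) with h1 | h1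
          · exact absurd h1 hab
          · exact h1
        have hah : 0 < a * h := by
          nlinarith [mul_pos hab' hhead]
        have hrest : rest <+ t' := by
          cases hsub with
          | cons _ h2 => exact (List.sublist_cons_self h rest).trans h2
          | cons_cons _ h2 => exact h2
        refine ⟨a :: rest,
          List.Sublist.cons₂ a (hrest.trans (List.sublist_cons_self b t')), ?_, ?_, ?_, ?_⟩
        · rw [List.Chain', List.isChain_cons]
          constructor
          · intro y hy
            cases rest with
            | nil => simp at hy
            | cons r rs =>
              simp only [List.head?_cons, Option.mem_some_iff] at hy
              subst hy
              have h1 : h * r < 0 := (List.isChain_cons_cons.mp hchain).1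
              nlinarith [mul_neg_of_pos_of_neg hah h1]
          · exact hchain.tail
        · rw [List.length_cons] at hlen ⊢
          rw [chg_cons2, if_neg hab, zero_add, ← hlen]
        · simpa using mul_self_pos.mpr ha
        · cases rest with
          | nil =>
            have e2 : ([h] : List ℝ).getLastD 1 = h := rfl
            rw [e2] at hlast
            have e1 : ([a] : List ℝ).getLastD 1 = a := rfl
            rw [getLastD_cons_ne a (l := b :: t') (by simp) 1 1, e1]
            nlinarith
          | cons r rs =>
            rw [getLastD_cons_ne a (l := r :: rs) (by simp) 1 1,
              getLastD_cons_ne a (l := b :: t') (by simp) 1 1]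
            rw [getLastD_cons_ne h (l := r :: rs) (by simp) 1 1] at hlast
            exact hlast

lemma sorted_lt_sublist_range : ∀ (n : ℕ) (L : List ℕ), L.Pairwise (· < ·) →
    (∀ x ∈ L, x < n) → L <+ List.range n := by
  intro n
  induction n with
  | zero =>
    intro L _ hb
    cases L with
    | nil => simp
    | cons a t => exact absurd (hb a (by simp)) (by omega)
  | succ n ih =>
    intro L hpw hb
    rcases eq_or_ne L [] with rfl | hLne
    · simp
    · have hsplit : L.dropLast ++ [L.getLast hLne] = L := List.dropLast_append_getLast hLne
      rw [List.range_succ]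
      have hpw' : (L.dropLast ++ [L.getLast hLne]).Pairwise (· < ·) := by rwa [hsplit]
      rw [List.pairwise_append] at hpw'
      have hdl : ∀ x ∈ L.dropLast, x < L.getLast hLne := by
        intro x hx
        exact hpw'.2.2 x hx _ (by simp)
      have hgl : L.getLast hLne < n + 1 := hb _ (List.getLast_mem hLne)
      by_cases hlast : L.getLast hLne = n
      · rw [← hsplit, hlast]
        refine List.Sublist.append ?_ (List.Sublist.refl _)
        exact ih _ hpw'.1 (fun x hx => by have := hdl x hx; omega)
      · have hbn : ∀ x ∈ L, x < n := by
          intro x hx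
          rw [← hsplit] at hx
          rcases List.mem_append.mp hx with h1 | h1
          · have := hdl x h1; omega
          · have : x = L.getLast hLne := by simpa using h1
            omega
        exact (ih L hpw hbn).trans (List.sublist_append_left _ _)

lemma signChanges_eq_chg (r : Polynomial ℝ) :
    signChanges r = chg (((List.range (r.natDegree + 1)).map r.coeff).filter (fun a => a ≠ 0)) := by
  rw [← chg_eq]; rfl

lemma extract_coeff (p q : Polynomial ℝ) (α : ℝ) (hα : 0 < α)
    (hsum : ∀ v, ∑ k ∈ Finset.range (v+1), p.coeff k * α^k = -(q.coeff v) * α^(v+1))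
    (v w : ℕ) (hqv : q.coeff v ≠ 0) (hwv : w ≤ v)
    (h0 : 0 ≤ (∑ k ∈ Finset.range w, p.coeff k * α^k) * q.coeff v) :
    ∃ k, w ≤ k ∧ k ≤ v ∧ p.coeff k * q.coeff v < 0 := by
  have hlt : ∑ k ∈ Finset.Ico w (v+1), (p.coeff k * α^k * q.coeff v)
      < ∑ k ∈ Finset.Ico w (v+1), (0:ℝ) := by
    rw [Finset.sum_const_zero, ← Finset.sum_mul, Finset.sum_Ico_eq_sub _ (by omega), hsum v]
    have h2 := mul_self_pos.mpr hqv
    nlinarith [pow_pos hα (v+1), mul_pos h2 (pow_pos hα (v+1))]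
  obtain ⟨k, hk, hk2⟩ := Finset.exists_lt_of_sum_lt hlt
  rw [Finset.mem_Ico] at hk
  refine ⟨k, hk.1, by omega, ?_⟩
  nlinarith [pow_pos hα k]

lemma lemC (p q : Polynomial ℝ) (α : ℝ) (hα : 0 < α)
    (hsum : ∀ v, ∑ k ∈ Finset.range (v+1), p.coeff k * α^k = -(q.coeff v) * α^(v+1)) :
    ∀ (J : List ℕ) (w : ℕ), J ≠ [] →
      J.Chain' (fun a b => q.coeff a * q.coeff b < 0) →
      J.Pairwise (· < ·) →
      (∀ i ∈ J, q.coeff i ≠ 0) →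
      (∀ i ∈ J, w ≤ i) →
      0 ≤ (∑ k ∈ Finset.range w, p.coeff k * α^k) * q.coeff J.headI →
      ∃ K : List ℕ, K ≠ [] ∧ K.Pairwise (· < ·) ∧ K.length = J.length ∧
        K.Chain' (fun a b => p.coeff a * p.coeff b < 0) ∧
        (∀ x ∈ K, w ≤ x ∧ ∃ i ∈ J, x ≤ i) ∧
        (∀ x ∈ K, p.coeff x ≠ 0) ∧
        p.coeff K.headI * q.coeff J.headI < 0 ∧
        p.coeff (K.getLastD 0) * q.coeff (J.getLastD 0) < 0 := by
  intro J
  induction J with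
  | nil => intro w h; exact absurd rfl h
  | cons v J' ih =>
    intro w _ hchain hpw hnz hwle h0
    simp only [List.headI] at h0
    obtain ⟨k, hwk, hkv, hk⟩ :=
      extract_coeff p q α hα hsum v w (hnz v (by simp)) (hwle v (by simp)) h0
    have hpk : p.coeff k ≠ 0 := fun e => by rw [e] at hk; simp at hk
    cases J' with
    | nil =>
      refine ⟨[k], by simp, by simp, by simp, List.isChain_singleton _, ?_, ?_, ?_, ?_⟩
      · intro x hx; simp at hx; subst hx; exact ⟨hwk, v, by simp, hkv⟩
      · intro x hx; simp at hx; subst hx; exact hpk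
      · simpa using hk
      · simpa using hk
    | cons v' rest =>
      have hvv' : q.coeff v * q.coeff v' < 0 := (List.isChain_cons_cons.mp hchain).1
      obtain ⟨K', hKne, hKpw, hKlen, hKchain, hKb, hKnz, hKhead, hKlast⟩ :=
        ih (v+1) (by simp) (List.isChain_cons_cons.mp hchain).2 (List.pairwise_cons.mp hpw).2
          (fun i hi => hnz i (List.mem_cons_of_mem _ hi))
          (fun i hi => by have := (List.pairwise_cons.mp hpw).1 i hi; omega)
          (by
            simp only [List.headI]
            rw [hsum v]
            nlinarith [pow_pos hα (v+1)])
      obtain ⟨k', K'', rfl⟩ : ∃ x y, K' = x :: y := by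
        cases K' with
        | nil => exact absurd rfl hKne
        | cons x y => exact ⟨x, y, rfl⟩
      simp only [List.headI] at hKhead
      have hkk' : p.coeff k * p.coeff k' < 0 := by
        nlinarith [mul_pos_of_neg_of_neg hk hKhead]
      refine ⟨k :: k' :: K'', by simp, ?_, ?_, ?_, ?_, ?_, ?_, ?_⟩
      · rw [List.pairwise_cons]
        refine ⟨fun x hx => ?_, hKpw⟩
        have := (hKb x hx).1
        omega
      · simp only [List.length_cons] at hKlen ⊢
        omega
      · rw [List.Chain', List.isChain_cons_cons]
        exact ⟨hkk', hKchain⟩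
      · intro x hx
        rcases List.mem_cons.mp hx with rfl | hx'
        · exact ⟨hwk, v, by simp, hkv⟩
        · have h1 := (hKb x hx').1
          obtain ⟨i, hi, hxi⟩ := (hKb x hx').2
          exact ⟨by omega, i, List.mem_cons_of_mem _ hi, hxi⟩
      · intro x hx
        rcases List.mem_cons.mp hx with rfl | hx'
        · exact hpk
        · exact hKnz x hx'
      · simpa using hk
      · rw [getLastD_cons_ne k (l := k' :: K'') (by simp) 0 0,
          getLastD_cons_ne v (l := v' :: rest) (by simp) 0 0]
        exact hKlast

/-- If `α > 0` and `p(t) = (t - α) * q(t)` with `p ≠ 0`, then the number of sign changes of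
`q` is at most the number of sign changes of `p` minus one. -/
theorem signChanges_of_factor_pos_root (p q : Polynomial ℝ) (α : ℝ) (hα : 0 < α)
    (hp : p ≠ 0) (hfac : p = (Polynomial.X - Polynomial.C α) * q) :
    signChanges q + 1 ≤ signChanges p := by
  have hq : q ≠ 0 := by
    intro h; apply hp; rw [hfac, h, mul_zero]
  set m := q.natDegree with hm
  have hdeg : p.natDegree = m + 1 := by
    rw [hfac, Polynomial.natDegree_mul (Polynomial.X_sub_C_ne_zero α) hq,
      Polynomial.natDegree_X_sub_C, add_comm]
  have hcs : ∀ k, p.coeff (k+1) = q.coeff k - α * q.coeff (k+1) := by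
    intro k
    rw [hfac, sub_mul, Polynomial.coeff_sub, Polynomial.coeff_X_mul, Polynomial.coeff_C_mul]
  have hc0 : p.coeff 0 = -(α * q.coeff 0) := by
    rw [hfac, Polynomial.mul_coeff_zero]
    simp
  have hsum : ∀ v, ∑ k ∈ Finset.range (v+1), p.coeff k * α^k = -(q.coeff v) * α^(v+1) := by
    intro v
    induction v with
    | zero => simp [hc0]; ring
    | succ v ihv => rw [Finset.sum_range_succ, ihv, hcs v]; ring
  have hlead : q.coeff m ≠ 0 := by
    rw [hm]
    exact Polynomial.leadingCoeff_ne_zero.mpr hq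
  have htop : p.coeff (m+1) = q.coeff m := by
    rw [hcs m, hm, Polynomial.coeff_natDegree_succ_eq_zero, mul_zero, sub_zero]
  set lq : List ℝ := ((List.range (m+1)).map q.coeff).filter (fun a => a ≠ 0) with hlq
  have hnzq : ∀ x ∈ lq, x ≠ 0 := by
    intro x hx; rw [hlq] at hx; simp only [List.mem_filter, decide_eq_true_eq] at hx
    exact hx.2
  have hqsign : signChanges q = chg lq := by
    rw [signChanges_eq_chg, ← hm, ← hlq]
  have hsplitq : (List.range (m+1)).map q.coeff = (List.range m).map q.coeff ++ [q.coeff m] := by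
    rw [List.range_succ, List.map_append]; rfl
  have hlqlast : lq.getLast? = some (q.coeff m) := by
    rw [hlq, hsplitq, List.filter_append]
    have h1 : List.filter (fun a => decide (a ≠ 0)) [q.coeff m] = [q.coeff m] := by
      simp [hlead]
    rw [h1, List.getLast?_concat]
  have hlqne : lq ≠ [] := by
    intro h; rw [h] at hlqlast; simp at hlqlast
  have hlq2 : lq = ((List.range (m+1)).filter (fun i => q.coeff i ≠ 0)).map q.coeff := by
    rw [hlq]; exact List.filter_map
  obtain ⟨l', hsub, hchain, hlen, hhead, hlast⟩ := exists_alt_sublist lq hnzq hlqne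
  rw [hlq2] at hsub
  obtain ⟨J, hJsub, rfl⟩ := List.sublist_map_iff.mp hsub
  have hJne : J ≠ [] := by
    rintro rfl; rw [List.map_nil, List.length_nil] at hlen; omega
  have hJrange : J <+ List.range (m+1) := hJsub.trans List.filter_sublist
  have hJpw : J.Pairwise (· < ·) := List.pairwise_lt_range.sublist hJrange
  have hJmem : ∀ i ∈ J, i < m + 1 := fun i hi => List.mem_range.mp (hJrange.subset hi)
  have hJnz : ∀ i ∈ J, q.coeff i ≠ 0 := by
    intro i hi
    have h1 := hJsub.subset hi
    simp only [List.mem_filter, decide_eq_true_eq] at h1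
    exact h1.2
  have hJchain : J.Chain' (fun a b => q.coeff a * q.coeff b < 0) :=
    (List.isChain_map q.coeff).mp hchain
  obtain ⟨K, hKne, hKpw, hKlen, hKchain, hKb, hKnz, hKhead, hKlast⟩ :=
    lemC p q α hα hsum J 0 hJne hJchain hJpw hJnz (fun i _ => Nat.zero_le i) (by simp)
  have hlqlastD : lq.getLastD 1 = q.coeff m := by
    rw [List.getLastD_eq_getLast?, hlqlast]; rfl
  have hJlastD : (J.map q.coeff).getLastD 1 = q.coeff (J.getLastD 0) :=
    getLastD_map q.coeff J hJne 1 0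
  rw [hJlastD, hlqlastD] at hlast
  have hBne : q.coeff (J.getLastD 0) ≠ 0 := by
    intro e; rw [e] at hlast; simp at hlast
  have hKbound : ∀ k ∈ K, k < m + 1 := by
    intro k hk
    obtain ⟨i, hi, hki⟩ := (hKb k hk).2
    have := hJmem i hi
    omega
  have hKfpw : (K ++ [m+1]).Pairwise (· < ·) := by
    rw [List.pairwise_append]
    refine ⟨hKpw, by simp, fun a ha b hb => ?_⟩
    simp only [List.mem_singleton] at hb
    subst hb
    exact hKbound a ha
  have hKfsub : (K ++ [m+1]) <+ List.range (m+2) := by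
    refine sorted_lt_sublist_range _ _ hKfpw ?_
    intro x hx
    rcases List.mem_append.mp hx with h1 | h1
    · have := hKbound x h1; omega
    · simp at h1; omega
  have hKlast? : K.getLast? = some (K.getLastD 0) := by
    rw [List.getLast?_eq_getLast hKne]
    congr 1
    rw [List.getLastD_eq_getLast?, List.getLast?_eq_getLast hKne]
    rfl
  have hKfchain : (K ++ [m+1]).Chain' (fun a b => p.coeff a * p.coeff b < 0) := by
    rw [List.Chain', List.isChain_append]
    refine ⟨hKchain, by simp, ?_⟩
    intro x hx y hy
    rw [hKlast?] at hx
    simp only [Option.mem_some_iff] at hx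
    simp only [List.head?_cons, Option.mem_some_iff] at hy
    subst hx; subst hy
    rw [htop]
    nlinarith [mul_neg_of_neg_of_pos hKlast hlast, mul_self_pos.mpr hBne]
  set V : List ℝ := (K ++ [m+1]).map p.coeff with hV
  have hVchain : V.Chain' (fun a b => a * b < 0) := (List.isChain_map p.coeff).mpr hKfchain
  have hVnz : ∀ x ∈ V, x ≠ 0 := by
    intro x hx
    rw [hV, List.mem_map] at hx
    obtain ⟨k, hk, rfl⟩ := hx
    rcases List.mem_append.mp hk with h1 | h1
    · exact hKnz k h1
    · simp only [List.mem_singleton] at h1; subst h1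
      rw [htop]; exact hlead
  have hVne : V ≠ [] := by rw [hV]; simp
  have hVsub : V <+ (List.range (m+2)).map p.coeff := hKfsub.map p.coeff
  have hVfil : V.filter (fun a => a ≠ 0) = V :=
    List.filter_eq_self.mpr (fun x hx => by simpa using hVnz x hx)
  have hVsub2 : V <+ ((List.range (m+2)).map p.coeff).filter (fun a => a ≠ 0) := by
    rw [← hVfil]
    exact hVsub.filter _
  have hpsign : signChanges p = chg (((List.range (m+2)).map p.coeff).filter (fun a => a ≠ 0)) := by
    rw [signChanges_eq_chg, hdeg]
  have hnzp : ∀ x ∈ ((List.range (m+2)).map p.coeff).filter (fun a => a ≠ 0), x ≠ 0 := by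
    intro x hx
    simp only [List.mem_filter, decide_eq_true_eq] at hx
    exact hx.2
  have hchgV : chg V + 1 = V.length := chg_chain V hVne hVchain
  have hVlen : V.length = chg lq + 2 := by
    rw [hV, List.length_map, List.length_append, hKlen]
    have h2 : (J.map q.coeff).length = chg lq + 1 := hlen
    rw [List.length_map] at h2
    simp [h2]
  have hfin := chg_sublist hVsub2 hnzp
  rw [hqsign, hpsign]
  omega
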